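/- For κ > 0 and p ≥ 2, the function κ ↦ κ / A_p(κ) is strictly convex on (0, ∞). -/

import Mathlib

open Real

/-- Modified Bessel function of the first kind, `I_v(κ)`. -/
noncomputable def besselI (v κ : ℝ) : ℝ :=
  ∑' q : ℕ, (1 / (q.factorial * Real.Gamma (q + v + 1))) * (κ / 2) ^ ((2 * q : ℝ) + v)

/-- The Bessel ratio `A_p(κ) = I_{p/2}(κ) / I_{p/2-1}(κ)`. -/
noncomputable def Ap (p : ℕ) (κ : ℝ) : ℝ :=
  besselI (p / 2 : ℝ) κ / besselI ((p / 2 : ℝ) - 1) κ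

open Set Filter Topology

namespace S11

noncomputable def c (μ : ℝ) (q : ℕ) : ℝ := 1 / (q.factorial * Real.Gamma (q + μ + 1))

noncomputable def g (μ : ℝ) (t : ℝ) : ℝ := ∑' q : ℕ, c μ q * t ^ q

lemma arg_pos {μ : ℝ} (hμ : 0 ≤ μ) (q : ℕ) : 0 < (q : ℝ) + μ + 1 := by positivity

lemma c_pos {μ : ℝ} (hμ : 0 ≤ μ) (q : ℕ) : 0 < c μ q := by
  have h1 := Real.Gamma_pos_of_pos (arg_pos hμ q)
  have h2 : (0:ℝ) < q.factorial := by exact_mod_cast q.factorial_pos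
  unfold c; positivity

lemma c_succ {μ : ℝ} (hμ : 0 ≤ μ) (q : ℕ) :
    c μ (q+1) = c μ q / (((q:ℝ)+1) * ((q:ℝ) + μ + 1)) := by
  have h1 : ((q:ℝ) + μ + 1) ≠ 0 := (arg_pos hμ q).ne'
  have h2 : Real.Gamma (((q+1:ℕ):ℝ) + μ + 1) = ((q:ℝ) + μ + 1) * Real.Gamma ((q:ℝ) + μ + 1) := by
    have : (((q+1:ℕ):ℝ) + μ + 1) = ((q:ℝ) + μ + 1) + 1 := by push_cast; ring
    rw [this, Real.Gamma_add_one h1]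
  have h3 : ((q+1:ℕ).factorial : ℝ) = ((q:ℝ)+1) * (q.factorial : ℝ) := by
    rw [Nat.factorial_succ]; push_cast; ring
  have h4 := Real.Gamma_pos_of_pos (arg_pos hμ q)
  have h5 : (0:ℝ) < q.factorial := by exact_mod_cast q.factorial_pos
  unfold c
  rw [h2, h3]
  field_simp

lemma c_shift {μ : ℝ} (q : ℕ) : c μ (q+1) * (((q:ℕ):ℝ)+1) = c (μ+1) q := by
  have h3 : ((q+1:ℕ).factorial : ℝ) = ((q:ℝ)+1) * (q.factorial : ℝ) := by
    rw [Nat.factorial_succ]; push_cast; ring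
  unfold c
  rw [h3]
  have h2 : (((q+1:ℕ):ℝ) + μ + 1) = ((q:ℝ) + (μ+1) + 1) := by push_cast; ring
  rw [h2]
  have h5 : (0:ℝ) < q.factorial := by exact_mod_cast q.factorial_pos
  rcases eq_or_ne (Real.Gamma ((q:ℝ) + (μ+1) + 1)) 0 with h | h
  · rw [h]; simp
  · field_simp

lemma summable_pow {μ : ℝ} (hμ : 0 ≤ μ) (t : ℝ) : Summable (fun q => c μ q * t ^ q) := by
  apply summable_of_ratio_norm_eventually_le (r := 1/2) (by norm_num)
  filter_upwards [Filter.eventually_ge_atTop ⌈2*|t|⌉₊] with q hq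
  have hq' : 2*|t| ≤ (q:ℝ) := by
    refine le_trans ?_ (Nat.cast_le.mpr hq)
    exact Nat.le_ceil _
  have hc := c_pos hμ q
  have hc1 := c_pos hμ (q+1)
  rw [c_succ hμ q]
  have h1 : 1 ≤ ((q:ℝ) + μ + 1) := by
    have : (0:ℝ) ≤ (q:ℝ) := Nat.cast_nonneg q
    linarith
  rw [norm_mul, norm_mul, Real.norm_eq_abs, Real.norm_eq_abs, Real.norm_eq_abs, Real.norm_eq_abs,
    abs_of_pos (div_pos hc (by positivity)), abs_of_pos hc, pow_succ, abs_mul]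
  rw [div_mul_eq_mul_div]
  rw [div_le_iff₀ (by positivity)]
  calc c μ q * (|t ^ q| * |t|) = c μ q * |t^q| * |t| := by ring
    _ ≤ c μ q * |t^q| * ((1/2) * (((q:ℝ)+1) * 1)) := by
        apply mul_le_mul_of_nonneg_left _ (by positivity)
        nlinarith [abs_nonneg t]
    _ ≤ 1 / 2 * (c μ q * |t ^ q|) * (((q:ℝ) + 1) * ((q:ℝ) + μ + 1)) := by
        have : (0:ℝ) ≤ c μ q * |t^q| := by positivity
        have h2 : ((q:ℝ)+1) * 1 ≤ ((q:ℝ)+1) * ((q:ℝ)+μ+1) := by nlinarith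
        nlinarith

lemma summable_deriv_bound {μ : ℝ} (hμ : 0 ≤ μ) {R : ℝ} (hR : 1 ≤ R) :
    Summable (fun q : ℕ => c μ q * ((q:ℝ) * R ^ (q-1))) := by
  apply summable_of_ratio_norm_eventually_le (r := 1/2) (by norm_num)
  filter_upwards [Filter.eventually_ge_atTop (⌈2*R⌉₊ + 1)] with q hq
  obtain ⟨k, rfl⟩ : ∃ k, q = k + 1 := ⟨q - 1, by omega⟩
  have hk : 2*R ≤ ((k:ℝ)+1) := by
    have h0 : ⌈2*R⌉₊ ≤ k := Nat.le_of_succ_le_succ hq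
    have h1 : (⌈2*R⌉₊ : ℝ) ≤ (k:ℝ) := by exact_mod_cast h0
    have := Nat.le_ceil (2*R)
    linarith
  have hc := c_pos hμ (k+1)
  have hc2 := c_pos hμ (k+2)
  have hR0 : (0:ℝ) < R := by linarith
  simp only [Nat.add_sub_cancel]
  have hkpos : (0:ℝ) ≤ (k:ℝ) := Nat.cast_nonneg k
  have pA : 0 < c μ (k+1+1) * (((k+1+1:ℕ):ℝ) * R ^ (k+1)) := by
    refine mul_pos hc2 (mul_pos ?_ (pow_pos hR0 _))
    positivity
  have pB : 0 < c μ (k+1) * (((k+1:ℕ):ℝ) * R ^ k) := by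
    refine mul_pos hc (mul_pos ?_ (pow_pos hR0 _))
    positivity
  rw [Real.norm_eq_abs, Real.norm_eq_abs, abs_of_pos pA, abs_of_pos pB]
  have hcs : c μ (k+1+1) = c μ (k+1) / ((((k+1:ℕ):ℝ)+1) * (((k+1:ℕ):ℝ) + μ + 1)) := c_succ hμ (k+1)
  rw [hcs]
  have hden : (0:ℝ) < (((k+1:ℕ):ℝ)+1) * (((k+1:ℕ):ℝ) + μ + 1) := by push_cast; nlinarith
  rw [div_mul_eq_mul_div, div_le_iff₀ hden]
  push_cast
  have hRp : (0:ℝ) < R ^ k := pow_pos hR0 k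
  have hpow : R^(k+1) = R^k * R := pow_succ R k
  rw [hpow]
  have hmu2 : (1:ℝ) ≤ (k:ℝ)+1+μ+1 := by linarith
  have key : ((k:ℝ)+1+1) * R ≤ (1/2) * (((k:ℝ)+1) * (((k:ℝ)+1+1) * ((k:ℝ)+1+μ+1))) := by
    have e : ((k:ℝ)+1+1)*R = (((k:ℝ)+1+1)*(2*R))/2 := by ring
    have step1 : (((k:ℝ)+1+1)*(2*R))/2 ≤ (((k:ℝ)+1+1)*((k:ℝ)+1))/2 := by
      have := mul_le_mul_of_nonneg_left hk (by linarith : (0:ℝ) ≤ (k:ℝ)+1+1)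
      linarith
    have step2 : (((k:ℝ)+1+1)*((k:ℝ)+1))/2 ≤ 1/2*(((k:ℝ)+1)*(((k:ℝ)+1+1)*((k:ℝ)+1+μ+1))) := by
      nlinarith [mul_nonneg (mul_nonneg (by linarith : (0:ℝ) ≤ (k:ℝ)+1) (by linarith : (0:ℝ) ≤ (k:ℝ)+1+1)) (by linarith : (0:ℝ) ≤ (k:ℝ)+μ+1)]
    linarith
  calc c μ (k+1) * (((k:ℝ)+1+1) * (R^k * R)) = (c μ (k+1) * R^k) * ((((k:ℝ)+1+1)) * R) := by ring
    _ ≤ (c μ (k+1) * R^k) * ((1/2) * (((k:ℝ)+1) * (((k:ℝ)+1+1) * ((k:ℝ)+1+μ+1)))) := by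
        exact mul_le_mul_of_nonneg_left key (by positivity)
    _ = 1/2 * (c μ (k+1) * (((k:ℝ)+1) * R^k)) * (((k:ℝ)+1+1) * (((k:ℝ)+1) + μ + 1)) := by ring

lemma hasDerivAt_g {μ : ℝ} (hμ : 0 ≤ μ) (t : ℝ) : HasDerivAt (g μ) (g (μ+1) t) t := by
  set R : ℝ := |t| + 1 with hRdef
  have hR : 1 ≤ R := by have := abs_nonneg t; linarith
  have hR0 : 0 < R := by linarith
  have htmem : t ∈ Set.Ioo (-R) R := by
    constructor
    · have := neg_abs_le t; linarith
    · have := le_abs_self t; linarith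
  have hbd : ∀ (q : ℕ) (y : ℝ), y ∈ Set.Ioo (-R) R →
      ‖c μ q * ((q:ℝ) * y ^ (q-1))‖ ≤ c μ q * ((q:ℝ) * R ^ (q-1)) := by
    intro q y hy
    have hyR : |y| ≤ R := by
      rw [abs_le]; exact ⟨hy.1.le, hy.2.le⟩
    have hc := c_pos hμ q
    rw [norm_mul, norm_mul, Real.norm_eq_abs, Real.norm_eq_abs, Real.norm_eq_abs,
      abs_of_pos hc, Nat.abs_cast, abs_pow]
    have : |y|^(q-1) ≤ R^(q-1) := pow_le_pow_left₀ (abs_nonneg y) hyR _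
    have hq0 : (0:ℝ) ≤ (q:ℝ) := Nat.cast_nonneg q
    exact mul_le_mul_of_nonneg_left (mul_le_mul_of_nonneg_left this hq0) hc.le
  have key := hasDerivAt_tsum_of_isPreconnected
    (summable_deriv_bound hμ hR) (isOpen_Ioo (a := -R) (b := R))
    ((convex_Ioo _ _).isPreconnected)
    (g := fun q y => c μ q * y ^ q)
    (g' := fun q y => c μ q * ((q:ℝ) * y ^ (q-1)))
    (fun q y _ => (hasDerivAt_pow q y).const_mul (c μ q))
    hbd (y₀ := 0) (Set.mem_Ioo.mpr (by constructor <;> linarith)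
    ) (summable_pow hμ 0) htmem
  have hsum : Summable (fun q : ℕ => c μ q * ((q:ℝ) * t ^ (q-1))) := by
    apply Summable.of_norm_bounded (summable_deriv_bound hμ hR)
    intro q; exact hbd q t htmem
  have hshift : (∑' q : ℕ, c μ q * ((q:ℝ) * t ^ (q-1))) = g (μ+1) t := by
    rw [Summable.tsum_eq_zero_add hsum]
    simp only [Nat.cast_zero, zero_mul, mul_zero, zero_add]
    unfold g
    apply tsum_congr
    intro q
    have e2 : (q+1 : ℕ) - 1 = q := rfl
    rw [e2]
    push_cast
    rw [← c_shift (μ := μ) q]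
    push_cast
    ring
  rw [← hshift]
  exact key

lemma g_pos {μ : ℝ} (hμ : 0 ≤ μ) {t : ℝ} (ht : 0 ≤ t) : 0 < g μ t := by
  have h0 : 0 < c μ 0 * t ^ 0 := by simpa using c_pos hμ 0
  exact Summable.tsum_pos (summable_pow hμ t) (fun q => mul_nonneg (c_pos hμ q).le (pow_nonneg ht q)) 0 h0

lemma g_zero (μ : ℝ) : g μ 0 = c μ 0 := by
  unfold g
  rw [tsum_eq_single 0 (by intro q hq; rcases Nat.exists_eq_add_of_lt (Nat.pos_of_ne_zero hq) with ⟨k, rfl⟩; simp [pow_succ])]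
  simp

lemma g_identity {ν : ℝ} (hν : 1 ≤ ν) (t : ℝ) :
    g (ν-1) t = ν * g ν t + t * g (ν+1) t := by
  have hν0 : (0:ℝ) ≤ ν := by linarith
  have hν1 : (0:ℝ) ≤ ν - 1 := by linarith
  have hs1 := summable_pow hν1 t
  have hs2 := summable_pow hν0 t
  have hs3 := summable_pow (by linarith : (0:ℝ) ≤ ν+1) t
  have hcoef : ∀ q : ℕ, c (ν-1) (q+1) - ν * c ν (q+1) = c (ν+1) q := by
    intro q
    have hqc : (0:ℝ) ≤ (q:ℝ) := Nat.cast_nonneg q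
    have h1 : ((q:ℝ) + ν) ≠ 0 := by nlinarith
    have hrec : Real.Gamma ((q:ℝ) + ν + 1) = ((q:ℝ)+ν) * Real.Gamma ((q:ℝ) + ν) := by
      rw [Real.Gamma_add_one h1]
    have hfac : ((q+1:ℕ).factorial : ℝ) = ((q:ℝ)+1) * (q.factorial : ℝ) := by
      rw [Nat.factorial_succ]; push_cast; ring
    have hgp : 0 < Real.Gamma ((q:ℝ) + ν) := Real.Gamma_pos_of_pos (by nlinarith)
    have hfp : (0:ℝ) < q.factorial := by exact_mod_cast q.factorial_pos
    unfold c
    have e1 : (((q+1:ℕ)):ℝ) + (ν-1) + 1 = (q:ℝ) + ν + 1 := by push_cast; ring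
    have e2 : (((q+1:ℕ)):ℝ) + ν + 1 = ((q:ℝ) + ν + 1) + 1 := by push_cast; ring
    have e3 : ((q:ℕ):ℝ) + (ν+1) + 1 = ((q:ℝ) + ν + 1) + 1 := by push_cast; ring
    rw [e1, e2, e3, hfac, Real.Gamma_add_one (by nlinarith : ((q:ℝ)+ν+1) ≠ 0), hrec]
    field_simp
    ring
  have hcoef0 : c (ν-1) 0 - ν * c ν 0 = 0 := by
    unfold c
    have e1 : ((0:ℕ):ℝ) + (ν-1) + 1 = ν := by push_cast; ring
    have e2 : ((0:ℕ):ℝ) + ν + 1 = ν + 1 := by push_cast; ring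
    rw [e1, e2, Real.Gamma_add_one (by nlinarith : ν ≠ 0)]
    have hg : 0 < Real.Gamma ν := Real.Gamma_pos_of_pos (by linarith)
    field_simp
    simp
  have hsub : Summable (fun q => (c (ν-1) q - ν * c ν q) * t ^ q) := by
    have := hs1.sub (hs2.mul_left ν)
    convert! this using 2 with q
    push_cast
    ring
  have main : g (ν-1) t - ν * g ν t = t * g (ν+1) t := by
    unfold g
    have h2 : ν * ∑' q:ℕ, c ν q * t^q = ∑' q:ℕ, ν * (c ν q * t^q) := (Summable.tsum_mul_left ν hs2).symm
    have hs2' : Summable (fun q:ℕ => ν * (c ν q * t^q)) := hs2.mul_left ν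
    rw [h2, ← Summable.tsum_sub hs1 hs2']
    have e : ∀ q:ℕ, c (ν-1) q * t^q - ν * (c ν q * t^q) = (c (ν-1) q - ν * c ν q) * t^q := by
      intro q; ring
    rw [tsum_congr e, Summable.tsum_eq_zero_add hsub]
    rw [hcoef0]
    simp only [zero_mul, zero_add]
    have h3 : t * ∑' q:ℕ, c (ν+1) q * t^q = ∑' q:ℕ, t * (c (ν+1) q * t^q) := (Summable.tsum_mul_left t hs3).symm
    rw [h3]
    apply tsum_congr
    intro q
    rw [hcoef]
    ring
  linarith [main]


lemma pos_on_Ici (F F' : ℝ → ℝ)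
    (hc : ∀ t : ℝ, 0 ≤ t → ContinuousAt F t)
    (hd : ∀ t : ℝ, 0 < t → HasDerivAt F (F' t) t)
    (h0 : 0 < F 0)
    (key : ∀ t : ℝ, 0 < t → F t = 0 → 0 < F' t) :
    ∀ t : ℝ, 0 ≤ t → 0 < F t := by
  by_contra hcon
  push_neg at hcon
  obtain ⟨t₀, ht₀, hFt₀⟩ := hcon
  have ht₀pos : 0 < t₀ := by
    rcases eq_or_lt_of_le ht₀ with h | h
    · exfalso; rw [← h] at hFt₀; linarith
    · exact h
  set S : Set ℝ := {t | t ∈ Icc 0 t₀ ∧ F t ≤ 0} with hSdef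
  have hne : S.Nonempty := ⟨t₀, ⟨le_of_lt ht₀pos, le_refl _⟩, hFt₀⟩
  have hbdd : BddBelow S := ⟨0, fun x hx => hx.1.1⟩
  have hclosed : IsClosed S := by
    have hcont : ContinuousOn F (Icc 0 t₀) := fun x hx => (hc x hx.1).continuousWithinAt
    have : S = Icc 0 t₀ ∩ F ⁻¹' (Iic 0) := by
      ext x; simp [hSdef, Set.mem_inter_iff, and_comm]
    rw [this]
    exact hcont.preimage_isClosed_of_isClosed isClosed_Icc isClosed_Iic
  set t₁ := sInf S with ht₁def
  have ht₁S : t₁ ∈ S := hclosed.csInf_mem hne hbdd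
  have ht₁0 : 0 ≤ t₁ := ht₁S.1.1
  have hFt₁ : F t₁ ≤ 0 := ht₁S.2
  have hlt : ∀ s : ℝ, 0 ≤ s → s < t₁ → 0 < F s := by
    intro s hs0 hst
    by_contra hFs
    push_neg at hFs
    have hsS : s ∈ S := ⟨⟨hs0, le_trans hst.le ht₁S.1.2⟩, hFs⟩
    exact absurd (csInf_le hbdd hsS) (not_le.mpr hst)
  have ht₁pos : 0 < t₁ := by
    rcases eq_or_lt_of_le ht₁0 with h | h
    · exfalso; rw [← h] at hFt₁; linarith
    · exact h
  have hF₁zero : F t₁ = 0 := by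
    rcases eq_or_lt_of_le hFt₁ with h | h
    · exact h
    · exfalso
      have htend := hc t₁ ht₁0
      have hev : ∀ᶠ x in 𝓝 t₁, F x < 0 := htend.eventually_lt_const h
      have hev' : ∀ᶠ x in 𝓝[<] t₁, F x < 0 := hev.filter_mono nhdsWithin_le_nhds
      have hmem : Ioo 0 t₁ ∈ 𝓝[<] t₁ := Ioo_mem_nhdsLT_of_mem ⟨ht₁pos, le_refl _⟩
      obtain ⟨s, hs1, hs2⟩ := (hev'.and (eventually_of_mem hmem (fun x hx => hx))).exists
      exact absurd (hlt s hs2.1.le hs2.2) (not_lt.mpr hs1.le)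
  have hder := key t₁ ht₁pos hF₁zero
  have hslope := (hasDerivAt_iff_tendsto_slope.mp (hd t₁ ht₁pos))
  have hev : ∀ᶠ x in 𝓝[≠] t₁, 0 < slope F t₁ x := hslope.eventually_const_lt hder
  have hev' : ∀ᶠ x in 𝓝[<] t₁, 0 < slope F t₁ x :=
    hev.filter_mono (nhdsWithin_mono _ (fun x hx => ne_of_lt hx))
  have hmem : Ioo 0 t₁ ∈ 𝓝[<] t₁ := Ioo_mem_nhdsLT_of_mem ⟨ht₁pos, le_refl _⟩
  obtain ⟨s, hs1, hs2⟩ := (hev'.and (eventually_of_mem hmem (fun x hx => hx))).exists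
  have hFs : 0 < F s := hlt s hs2.1.le hs2.2
  have : slope F t₁ s = F s / (s - t₁) := by
    rw [slope_def_field, hF₁zero]; ring
  rw [this] at hs1
  have hneg : s - t₁ < 0 := by linarith [hs2.2]
  have : F s / (s - t₁) < 0 := div_neg_of_pos_of_neg hFs hneg
  linarith


noncomputable def ph (ν : ℝ) (t : ℝ) : ℝ := g (ν-1) t / g ν t
noncomputable def P (ν : ℝ) (t : ℝ) : ℝ := 1 - g (ν-1) t * g (ν+1) t / (g ν t)^2
noncomputable def Q (ν : ℝ) (t : ℝ) : ℝ :=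
  (2 * g (ν-1) t * (g (ν+1) t)^2 - (g ν t)^2 * g (ν+1) t - g (ν-1) t * g ν t * g (ν+2) t)
    / (g ν t)^3

section Core
variable {ν : ℝ}

lemma hν0 (hν : 1 ≤ ν) : (0:ℝ) ≤ ν := by linarith
lemma hν1 (hν : 1 ≤ ν) : (0:ℝ) ≤ ν - 1 := by linarith

lemma hasDerivAt_u (hν : 1 ≤ ν) (t : ℝ) : HasDerivAt (g (ν-1)) (g ν t) t := by
  have h := hasDerivAt_g (hν1 hν) t
  simpa using h

lemma hasDerivAt_ph (hν : 1 ≤ ν) {t : ℝ} (ht : 0 < g ν t) : HasDerivAt (ph ν) (P ν t) t := by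
  have h := (hasDerivAt_u hν t).div (hasDerivAt_g (hν0 hν) t) ht.ne'
  have : (g ν t * g ν t - g (ν-1) t * g (ν+1) t) / (g ν t)^2 = P ν t := by
    unfold P; field_simp
  rw [← this]
  exact h

lemma hasDerivAt_P (hν : 1 ≤ ν) {t : ℝ} (ht : 0 < g ν t) : HasDerivAt (P ν) (Q ν t) t := by
  have hu := hasDerivAt_u hν t
  have hw := hasDerivAt_g (hν0 hν) t
  have hw1 := hasDerivAt_g (by linarith : (0:ℝ) ≤ ν + 1) t
  have hw2 : HasDerivAt (g (ν+1)) (g (ν+2) t) t := by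
    have : ν + 1 + 1 = ν + 2 := by ring
    rw [← this]; exact hw1
  have hnum : HasDerivAt (fun x => g (ν-1) x * g (ν+1) x)
      (g ν t * g (ν+1) t + g (ν-1) t * g (ν+2) t) t := hu.mul hw2
  have hden : HasDerivAt (fun x => (g ν x)^2) (2 * g ν t * g (ν+1) t) t := by
    have := hw.fun_pow 2
    simpa [mul_comm] using this
  have hfrac := hnum.div hden (by positivity)
  have h1 : HasDerivAt (P ν)
      (-(((g ν t * g (ν+1) t + g (ν-1) t * g (ν+2) t) * (g ν t)^2 -
        g (ν-1) t * g (ν+1) t * (2 * g ν t * g (ν+1) t)) / ((g ν t)^2)^2)) t :=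
    (hfrac.const_sub 1)
  have : -(((g ν t * g (ν+1) t + g (ν-1) t * g (ν+2) t) * (g ν t)^2 -
        g (ν-1) t * g (ν+1) t * (2 * g ν t * g (ν+1) t)) / ((g ν t)^2)^2) = Q ν t := by
    unfold Q; field_simp; ring
  rwa [this] at h1

lemma diff_Q (hν : 1 ≤ ν) {t : ℝ} (ht : 0 < g ν t) : DifferentiableAt ℝ (Q ν) t := by
  have hu := (hasDerivAt_u hν t).differentiableAt
  have hw := (hasDerivAt_g (hν0 hν) t).differentiableAt
  have hw1 := (hasDerivAt_g (by linarith : (0:ℝ) ≤ ν + 1) t).differentiableAt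
  have hw2 : DifferentiableAt ℝ (g (ν+2)) t := by
    have h := (hasDerivAt_g (by linarith : (0:ℝ) ≤ ν + 2) t).differentiableAt
    exact h
  apply DifferentiableAt.div
  · fun_prop
  · fun_prop
  · positivity

lemma R1 (hν : 1 ≤ ν) {t : ℝ} (ht : 0 < g ν t) :
    t * P ν t = t + ν * ph ν t - (ph ν t)^2 := by
  have hid : t * g (ν+1) t = g (ν-1) t - ν * g ν t := by linarith [g_identity hν t]
  unfold P ph
  rw [mul_sub, mul_one]
  have h2 : t * (g (ν-1) t * g (ν+1) t / (g ν t)^2) = (g (ν-1) t * (t * g (ν+1) t)) / (g ν t)^2 := by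
    ring
  rw [h2, hid]
  field_simp
  ring

lemma contg (μ : ℝ) (hμ : 0 ≤ μ) : Continuous (g μ) :=
  continuous_iff_continuousAt.mpr (fun t => (hasDerivAt_g hμ t).differentiableAt.continuousAt)

lemma isOpenW (hν : 1 ≤ ν) : IsOpen {t : ℝ | 0 < g ν t} :=
  isOpen_lt continuous_const (contg ν (hν0 hν))

lemma R2 (hν : 1 ≤ ν) {t : ℝ} (ht : 0 < g ν t) :
    t * Q ν t = 1 + (ν - 1 - 2 * ph ν t) * P ν t := by
  have hW := isOpenW hν
  have heq : Set.EqOn (fun x => x * P ν x) (fun x => x + ν * ph ν x - (ph ν x)^2)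
      {t : ℝ | 0 < g ν t} := fun x hx => by simpa using R1 hν hx
  have h1 : HasDerivAt (fun x => x * P ν x) (P ν t + t * Q ν t) t := by
    have := (hasDerivAt_id t).fun_mul (hasDerivAt_P hν ht)
    simpa using this
  have hphi := hasDerivAt_ph hν ht
  have h2 : HasDerivAt (fun x => x + ν * ph ν x - (ph ν x)^2)
      (1 + ν * P ν t - 2 * ph ν t * P ν t) t := by
    have ha := (hasDerivAt_id t).add (hphi.const_mul ν)
    have hb := hphi.fun_pow 2
    have := ha.sub hb
    convert! this using 1
    push_cast
    ring
  have hee : (fun x => x + ν * ph ν x - (ph ν x)^2) =ᶠ[𝓝 t] (fun x => x * P ν x) :=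
    Filter.eventuallyEq_of_mem (hW.mem_nhds ht) (fun x hx => (heq hx).symm)
  have h2' : HasDerivAt (fun x => x * P ν x) (1 + ν * P ν t - 2 * ph ν t * P ν t) t :=
    h2.congr_of_eventuallyEq hee.symm
  have := h1.unique h2'
  linarith [this]

lemma R3 (hν : 1 ≤ ν) {t : ℝ} (ht : 0 < g ν t) :
    t * deriv (Q ν) t = (ν - 2 - 2 * ph ν t) * Q ν t - 2 * (P ν t)^2 := by
  have hW := isOpenW hν
  have heq : Set.EqOn (fun x => x * Q ν x) (fun x => 1 + (ν - 1 - 2 * ph ν x) * P ν x)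
      {t : ℝ | 0 < g ν t} := fun x hx => by simpa using R2 hν hx
  have hQd : HasDerivAt (Q ν) (deriv (Q ν) t) t := (diff_Q hν ht).hasDerivAt
  have h1 : HasDerivAt (fun x => x * Q ν x) (Q ν t + t * deriv (Q ν) t) t := by
    have := (hasDerivAt_id t).fun_mul hQd
    simpa using this
  have hphi := hasDerivAt_ph hν ht
  have hP := hasDerivAt_P hν ht
  have h2 : HasDerivAt (fun x => 1 + (ν - 1 - 2 * ph ν x) * P ν x)
      ((-2 * P ν t) * P ν t + (ν - 1 - 2 * ph ν t) * Q ν t) t := by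
    have ha : HasDerivAt (fun x => ν - 1 - 2 * ph ν x) (-2 * P ν t) t := by
      have := (hphi.const_mul 2).const_sub (ν - 1)
      convert! this using 1; ring
    have := (ha.fun_mul hP).const_add 1
    convert this using 1
  have hee : (fun x => 1 + (ν - 1 - 2 * ph ν x) * P ν x) =ᶠ[𝓝 t] (fun x => x * Q ν x) :=
    Filter.eventuallyEq_of_mem (hW.mem_nhds ht) (fun x hx => (heq hx).symm)
  have h2' : HasDerivAt (fun x => x * Q ν x)
      ((-2 * P ν t) * P ν t + (ν - 1 - 2 * ph ν t) * Q ν t) t :=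
    h2.congr_of_eventuallyEq hee.symm
  have := h1.unique h2'
  nlinarith [this]


lemma ph_zero (hν : 1 ≤ ν) : ph ν 0 = ν := by
  have hg : 0 < Real.Gamma ν := Real.Gamma_pos_of_pos (by linarith)
  have e1 : ((0:ℕ):ℝ) + (ν-1) + 1 = ν := by push_cast; ring
  have e2 : ((0:ℕ):ℝ) + ν + 1 = ν + 1 := by push_cast; ring
  unfold ph
  rw [g_zero, g_zero]
  unfold c
  rw [e1, e2, Real.Gamma_add_one (by linarith : ν ≠ 0)]
  simp only [Nat.factorial_zero, Nat.cast_one, one_mul]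
  field_simp

lemma phi_lower (hν : 1 ≤ ν) :
    ∀ t : ℝ, 0 < t → Real.sqrt (t + (ν - 1/2)^2/4) + (ν - 1/2)/2 < ph ν t := by
  set s : ℝ := ν - 1/2 with hsdef
  have hs : (1:ℝ)/2 ≤ s := by simp [hsdef]; linarith
  have harg : ∀ t : ℝ, 0 ≤ t → (0:ℝ) < t + s^2/4 := by intro t ht; nlinarith
  set F : ℝ → ℝ := fun t => ph ν t - (Real.sqrt (t + s^2/4) + s/2) with hFdef
  set F' : ℝ → ℝ := fun t => P ν t - 1/(2 * Real.sqrt (t + s^2/4)) with hF'def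
  have hkey := pos_on_Ici F F'
    (by
      intro t ht
      have hw : 0 < g ν t := g_pos (hν0 hν) ht
      have h1 : ContinuousAt (ph ν) t := by
        unfold ph
        exact ((contg _ (hν1 hν)).continuousAt).div ((contg _ (hν0 hν)).continuousAt) hw.ne'
      have h2 : ContinuousAt (fun t : ℝ => Real.sqrt (t + s^2/4) + s/2) t := by
        apply ContinuousAt.add _ continuousAt_const
        exact (Real.continuous_sqrt.continuousAt).comp (by fun_prop)
      exact h1.sub h2
      )
    (by
      intro t ht
      have hw : 0 < g ν t := g_pos (hν0 hν) ht.le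
      have h1 := hasDerivAt_ph hν hw
      have hinner : HasDerivAt (fun x : ℝ => x + s^2/4) 1 t := by
        simpa using (hasDerivAt_id t).add_const (s^2/4)
      have h2 := hinner.sqrt (by nlinarith [harg t ht.le] : t + s^2/4 ≠ 0)
      have h2' : HasDerivAt (fun x : ℝ => Real.sqrt (x + s^2/4) + s/2)
          (1/(2 * Real.sqrt (t + s^2/4))) t := by
        simpa using h2.add_const (s/2)
      exact h1.sub h2'
      )
    (by
      have h1 : Real.sqrt ((0:ℝ) + s^2/4) = s/2 := by
        rw [zero_add]
        have : s^2/4 = (s/2)^2 := by ring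
        rw [this, Real.sqrt_sq (by linarith)]
      show 0 < ph ν 0 - (Real.sqrt ((0:ℝ) + s^2/4) + s/2)
      rw [ph_zero hν, h1, hsdef]
      linarith
      )
    (by
      intro t ht hFt
      have hw : 0 < g ν t := g_pos (hν0 hν) ht.le
      set R : ℝ := Real.sqrt (t + s^2/4) with hRdef
      have hR0 : 0 < R := Real.sqrt_pos.mpr (harg t ht.le)
      have hR2 : R^2 = t + s^2/4 := Real.sq_sqrt (harg t ht.le).le
      have hphL : ph ν t = R + s/2 := by
        have : ph ν t - (R + s/2) = 0 := hFt
        linarith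
      have hr1 := R1 hν hw
      rw [hphL] at hr1
      -- hr1 : t * P ν t = t + ν * (R + s/2) - (R + s/2)^2
      have hnu : ν = s + 1/2 := by rw [hsdef]; ring
      have hstep : t * P ν t * (8*R) = s^2 + 2*s*R + 4*t := by
        rw [hr1, hnu]
        linear_combination (4 - 8*R) * hR2
      show 0 < P ν t - 1/(2 * R)
      by_contra hcon
      push_neg at hcon
      have h1 : 8*R*t*(P ν t) ≤ 8*R*t*(1/(2*R)) := by
        apply mul_le_mul_of_nonneg_left _ (by positivity)
        linarith
      have h2 : 8*R*t*(1/(2*R)) = 4*t := by field_simp; ring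
      nlinarith [hstep, h1, h2, mul_pos (lt_of_lt_of_le one_half_pos hs) hR0, sq_nonneg s]
      )
  intro t ht
  have := hkey t ht.le
  simp only [hFdef] at this
  linarith [this]

lemma P_zero_pos (hν : 1 ≤ ν) : 0 < P ν 0 := by
  have hg : 0 < Real.Gamma ν := Real.Gamma_pos_of_pos (by linarith)
  have hν' : ν ≠ 0 := by linarith
  have hu0 : g (ν-1) 0 = 1 / Real.Gamma ν := by
    rw [g_zero]; unfold c
    rw [show ((0:ℕ):ℝ) + (ν-1) + 1 = ν from by push_cast; ring]
    norm_num
  have hw0 : g ν 0 = 1 / (ν * Real.Gamma ν) := by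
    rw [g_zero]; unfold c
    rw [show ((0:ℕ):ℝ) + ν + 1 = ν + 1 from by push_cast; ring,
      Real.Gamma_add_one hν']
    norm_num
  have hw10 : g (ν+1) 0 = 1 / ((ν+1) * (ν * Real.Gamma ν)) := by
    rw [g_zero]; unfold c
    rw [show ((0:ℕ):ℝ) + (ν+1) + 1 = (ν + 1) + 1 from by push_cast; ring,
      Real.Gamma_add_one (by positivity : ν + 1 ≠ 0), Real.Gamma_add_one hν']
    norm_num
  unfold P
  rw [hu0, hw0, hw10]
  have hkey : 1 / Real.Gamma ν * (1 / ((ν+1) * (ν * Real.Gamma ν))) / (1 / (ν * Real.Gamma ν))^2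
      = ν/(ν+1) := by
    field_simp
  rw [hkey, sub_pos, div_lt_one (by linarith)]
  linarith

set_option maxHeartbeats 1600000 in
lemma Gpos (hν : 1 ≤ ν) : ∀ t : ℝ, 0 ≤ t → 0 < 2*t*Q ν t + P ν t := by
  apply pos_on_Ici (fun t => 2*t*Q ν t + P ν t) (fun t => 3 * Q ν t + 2*t*deriv (Q ν) t)
  · intro t ht
    have hw : 0 < g ν t := g_pos (hν0 hν) ht
    have hQ : ContinuousAt (Q ν) t := (diff_Q hν hw).continuousAt
    have hP : ContinuousAt (P ν) t := (hasDerivAt_P hν hw).differentiableAt.continuousAt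
    exact (((continuousAt_id.const_mul 2).mul hQ)).add hP
  · intro t ht
    have hw : 0 < g ν t := g_pos (hν0 hν) ht.le
    have hQd : HasDerivAt (Q ν) (deriv (Q ν) t) t := (diff_Q hν hw).hasDerivAt
    have ha : HasDerivAt (fun x : ℝ => 2*x) 2 t := by
      simpa using (hasDerivAt_id t).const_mul 2
    have h1 := ha.fun_mul hQd
    have h2 := hasDerivAt_P hν hw
    have h3 := h1.add h2
    convert! h3 using 1 <;> ring
  · simpa using P_zero_pos hν
  · intro t ht hG
    have hw : 0 < g ν t := g_pos (hν0 hν) ht.le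
    set x := ph ν t with hx
    set p := P ν t with hp
    set q := Q ν t with hq
    set dq := deriv (Q ν) t with hdq
    have hr2 : t * q = 1 + (ν - 1 - 2*x) * p := R2 hν hw
    have hr3 : t * dq = (ν - 2 - 2*x) * q - 2*p^2 := R3 hν hw
    have hpl := phi_lower hν t ht
    set s : ℝ := ν - 1/2 with hsdef
    have hs : (1:ℝ)/2 ≤ s := by rw [hsdef]; linarith
    have hsq : Real.sqrt t ≤ Real.sqrt (t + s^2/4) := by
      apply Real.sqrt_le_sqrt; nlinarith
    have hxlow : Real.sqrt t + s/2 < x := by linarith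
    set Δ : ℝ := 4*x - 2*ν + 1 with hΔdef
    have hΔsqrt : 4 * Real.sqrt t < Δ := by rw [hΔdef]; linarith
    have hΔpos : 0 < Δ := lt_of_le_of_lt (by positivity) hΔsqrt
    have hΔ2 : 16 * t < Δ^2 := by
      have h16 : (4 * Real.sqrt t)^2 = 16 * t := by
        rw [mul_pow, Real.sq_sqrt ht.le]; norm_num
      nlinarith [Real.sqrt_nonneg t, hΔsqrt]
    have hGz : 2*t*q + p = 0 := hG
    have hpq : p = -2*(t*q) := by linarith
    have htq : t * q * Δ = -1 := by
      rw [hpq] at hr2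
      rw [hΔdef]
      nlinarith [hr2]
    have hA : t*(3*q + 2*t*dq) = 3*(t*q) + 2*(ν-2-2*x)*(t*q) - 4*t*p^2 := by
      linear_combination (2*t) * hr3
    have hB : 3*(t*q) + 2*(ν-2-2*x)*(t*q) - 4*t*p^2 = -((t*q)*Δ) - 4*t*p^2 := by
      rw [hΔdef]; ring
    have hC : p^2 = 4*(t*q)^2 := by rw [hpq]; ring
    have hD : (t*q)^2 * Δ^2 = 1 := by
      linear_combination (t*q*Δ - 1) * htq
    have htq2pos : 0 < (t*q)^2 := by
      nlinarith [hD, sq_nonneg Δ, sq_nonneg (t*q)]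
    have hlt : 16*t*(t*q)^2 < 1 := by
      nlinarith [hΔ2, htq2pos, hD]
    have hfin : t*(3*q + 2*t*dq) = 1 - 16*t*(t*q)^2 := by
      rw [hA, hB, hC]
      linear_combination -htq
    show 0 < 3 * q + 2*t*dq
    nlinarith [hfin, hlt, ht]


end Core

lemma besselI_eq {v κ : ℝ} (hκ : 0 < κ) :
    besselI v κ = (κ/2) ^ v * g v (κ^2/4) := by
  have hhalf : 0 < κ/2 := by linarith
  unfold besselI g
  rw [← tsum_mul_left]
  apply tsum_congr
  intro q
  unfold c
  have h1 : (κ/2) ^ ((2 * q : ℝ) + v) = (κ/2) ^ (2*q : ℕ) * (κ/2) ^ v := by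
    have e : (2 * (q:ℝ)) = ((2*q : ℕ) : ℝ) := by push_cast; ring
    rw [Real.rpow_add hhalf, e, Real.rpow_natCast]
  rw [h1]
  have h2 : (κ/2) ^ (2*q) = (κ^2/4) ^ q := by
    rw [pow_mul]
    congr 1
    ring
  rw [h2]
  ring

lemma target_eq {p : ℕ} (hp : 2 ≤ p) {κ : ℝ} (hκ : 0 < κ) :
    κ / Ap p κ = 2 * ph ((p:ℝ)/2) (κ^2/4) := by
  set ν : ℝ := (p:ℝ)/2 with hν
  have hν1' : 1 ≤ ν := by
    rw [hν]
    have : (2:ℝ) ≤ (p:ℝ) := by exact_mod_cast hp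
    linarith
  have ht : (0:ℝ) ≤ κ^2/4 := by positivity
  have hu : 0 < g (ν-1) (κ^2/4) := g_pos (hν1 hν1') ht
  have hw : 0 < g ν (κ^2/4) := g_pos (hν0 hν1') ht
  have hhalf : 0 < κ/2 := by linarith
  have e1 : besselI (p/2 : ℝ) κ = (κ/2) ^ ν * g ν (κ^2/4) := besselI_eq hκ
  have e2 : besselI ((p/2 : ℝ) - 1) κ = (κ/2) ^ (ν - 1) * g (ν-1) (κ^2/4) := besselI_eq hκ
  unfold Ap
  rw [e1, e2]
  unfold ph
  have hrpow : (κ/2) ^ ν = (κ/2) ^ (ν - 1) * (κ/2) := by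
    have h := Real.rpow_add hhalf (ν-1) 1
    rw [Real.rpow_one, sub_add_cancel] at h
    exact h
  rw [hrpow]
  have hr1 : (0:ℝ) < (κ/2) ^ (ν - 1) := Real.rpow_pos_of_pos hhalf _
  field_simp


end S11

open S11 in
theorem stmt_11 (p : ℕ) (hp : 2 ≤ p) :
    StrictConvexOn ℝ (Set.Ioi 0) (fun κ : ℝ => κ / Ap p κ) := by
  set ν : ℝ := (p:ℝ)/2 with hνdef
  have hν : 1 ≤ ν := by
    rw [hνdef]
    have : (2:ℝ) ≤ (p:ℝ) := by exact_mod_cast hp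
    linarith
  set F : ℝ → ℝ := fun κ => 2 * ph ν (κ^2/4) with hFdef
  have hgW : ∀ κ : ℝ, 0 < g ν (κ^2/4) := fun κ => g_pos (hν0 hν) (by positivity)
  have hinner : ∀ κ : ℝ, HasDerivAt (fun x : ℝ => x^2/4) (κ/2) κ := by
    intro κ
    have := (hasDerivAt_pow 2 κ).div_const 4
    convert! this using 1
    push_cast
    ring
  have hF1 : ∀ κ : ℝ, HasDerivAt F (κ * P ν (κ^2/4)) κ := by
    intro κ
    have hcomp := (hasDerivAt_ph hν (hgW κ)).comp κ (hinner κ)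
    have := hcomp.const_mul 2
    convert! this using 1
    ring
  have hderivF : deriv F = fun κ => κ * P ν (κ^2/4) := funext (fun κ => (hF1 κ).deriv)
  have hF2 : ∀ κ : ℝ, HasDerivAt (fun κ : ℝ => κ * P ν (κ^2/4))
      (2*(κ^2/4)*Q ν (κ^2/4) + P ν (κ^2/4)) κ := by
    intro κ
    have hcomp := (hasDerivAt_P hν (hgW κ)).comp κ (hinner κ)
    have := (hasDerivAt_id κ).fun_mul hcomp
    convert! this using 1
    simp only [Function.comp_apply, id_eq]
    ring
  have hEq : Set.EqOn (fun κ : ℝ => κ / Ap p κ) F (Set.Ioi 0) := by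
    intro κ hκ
    exact target_eq hp (Set.mem_Ioi.mp hκ)
  apply strictConvexOn_of_deriv2_pos (convex_Ioi 0)
  · apply ContinuousOn.congr _ hEq
    intro κ _
    exact ((hF1 κ).differentiableAt.continuousAt).continuousWithinAt
  · intro κ hκ
    rw [interior_Ioi] at hκ
    have hmem : Set.Ioi (0:ℝ) ∈ 𝓝 κ := isOpen_Ioi.mem_nhds hκ
    have hee : (fun κ : ℝ => κ / Ap p κ) =ᶠ[𝓝 κ] F := Filter.eventuallyEq_of_mem hmem hEq
    have hd1 : deriv (fun κ : ℝ => κ / Ap p κ) =ᶠ[𝓝 κ] deriv F := hee.deriv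
    have : deriv (deriv (fun κ : ℝ => κ / Ap p κ)) κ = deriv (deriv F) κ := hd1.deriv_eq
    simp only [Function.iterate_succ, Function.iterate_zero, Function.comp_apply, id_eq]
    rw [this, hderivF, (hF2 κ).deriv]
    exact Gpos hν (κ^2/4) (by positivity)
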